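/- With the cost C(δ;v) and subdivision ψ as above, and V_U = sup v < ∞, σ̄ = σ(1/(4L), P/(8L)), one has for every admissible δ and every index j: C(ψ[δ;j];v) − C(δ;v) ≤ (min_i ρ_i)^{−d_R−d_F/2} (2·4^{d_R+d_F+2} σ̄ V_U T^{d_F} / ρ_j^{d_F/2+1} + 4^{d_R+1} σ̄ V_U / ((2LP)^{d_F/2} ρ_j) + 4^{d_F+2} σ̄ V_U T^{d_F} / ρ_j^{d_F/2+1}). -/

import Mathlib

noncomputable def sigmaFun (L h ρ : ℝ) : ℝ := (ρ/4) * (1 + L*h) * ((1 + L*h)/(1 - L*h) + 6)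

/-- temporal nodes: t_k = h_1 + ... + h_k (0-based steps). -/
noncomputable def tnode (h : ℕ → ℝ) (k : ℕ) : ℝ := ∑ j ∈ Finset.range k, h j

/-- The cost estimator C(δ;v). -/
noncomputable def costC (L : ℝ) (dR dF : ℕ) (v : ℝ → ℝ) (n : ℕ) (h ρ : ℕ → ℝ) : ℝ :=
  ∑ k ∈ Finset.range n,
    4 * v (tnode h k) * (h k)^dF * sigmaFun L (h k) (ρ k) /
      ((ρ k)^dR * (min (ρ k) (ρ (k+1)))^(dF+1))

/-- step sizes after halving the step with 0-based index i₀. -/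
noncomputable def subh (h : ℕ → ℝ) (i₀ : ℕ) : ℕ → ℝ := fun i =>
  if i < i₀ then h i else if i ≤ i₀ + 1 then h i₀ / 2 else h (i-1)

/-- mesh sizes after quartering ρ_j into two copies (j ≥ 1). -/
noncomputable def subρ (ρ : ℕ → ℝ) (j : ℕ) : ℕ → ℝ := fun k =>
  if k < j then ρ k else if k ≤ j + 1 then ρ j / 4 else ρ (k-1)

/-- mesh sizes after quartering only ρ₀ (subdivision index j = 0). -/
noncomputable def subρ0 (ρ : ℕ → ℝ) : ℕ → ℝ := fun k => if k = 0 then ρ 0 / 4 else ρ k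

/-- cost of the discretization subdivided at index j. -/
noncomputable def costCsub (L : ℝ) (dR dF : ℕ) (v : ℝ → ℝ) (n : ℕ) (h ρ : ℕ → ℝ)
    (j : ℕ) : ℝ :=
  if j = 0 then costC L dR dF v n h (subρ0 ρ)
  else costC L dR dF v (n+1) (subh h (j-1)) (subρ ρ j)

lemma sigma_nonneg {L h ρ : ℝ} (hL : 0 ≤ L) (h0 : 0 ≤ h) (h1 : L * h < 1) (hρ : 0 ≤ ρ) :
    0 ≤ sigmaFun L h ρ := by
  have h2 : (0:ℝ) < 1 - L*h := by linarith
  have h3 : (0:ℝ) ≤ 1 + L*h := by positivity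
  unfold sigmaFun
  have : 0 ≤ (1 + L*h)/(1 - L*h) + 6 := by positivity
  positivity

lemma sigma_mono {L h h' ρ ρ' : ℝ} (hL : 0 ≤ L) (h0 : 0 ≤ h) (hh : h ≤ h')
    (h1 : L * h' < 1) (hρ0 : 0 ≤ ρ) (hρ : ρ ≤ ρ') :
    sigmaFun L h ρ ≤ sigmaFun L h' ρ' := by
  have hLh : L * h ≤ L * h' := by nlinarith
  have h2 : (0:ℝ) < 1 - L*h' := by linarith
  have h2' : (0:ℝ) < 1 - L*h := by linarith
  have h3 : (0:ℝ) ≤ 1 + L*h := by positivity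
  unfold sigmaFun
  have hd : (1 + L*h)/(1 - L*h) ≤ (1 + L*h')/(1 - L*h') := by
    rw [div_le_div_iff₀ h2' h2]; nlinarith
  have hn : 0 ≤ (1 + L*h)/(1 - L*h) + 6 := by positivity
  have hρ' : 0 ≤ ρ' := le_trans hρ0 hρ
  have h3' : (0:ℝ) ≤ 1 + L*h' := by nlinarith
  gcongr <;> nlinarith

lemma sigma_quarter (L h ρ : ℝ) : sigmaFun L h (ρ/4) = sigmaFun L h ρ / 4 := by
  unfold sigmaFun; ring

lemma core1 {m ra rj : ℝ} (dR dF : ℕ) (hm : 0 < m) (hma : m ≤ ra) (hmj : m ≤ rj) :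
    1/(ra^dR * rj^(dF+1)) ≤ m ^ (-(dR:ℝ) - (dF:ℝ)/2) / rj ^ ((dF:ℝ)/2 + 1) := by
  have hra : 0 < ra := lt_of_lt_of_le hm hma
  have hrj : 0 < rj := lt_of_lt_of_le hm hmj
  have e1 : m ^ (-(dR:ℝ) - (dF:ℝ)/2) = 1 / m ^ ((dR:ℝ) + (dF:ℝ)/2) := by
    rw [show (-(dR:ℝ) - (dF:ℝ)/2) = -((dR:ℝ)+(dF:ℝ)/2) by ring, Real.rpow_neg hm.le, one_div]
  rw [e1, div_div]
  apply one_div_le_one_div_of_le (by positivity)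
  have key : m ^ ((dR:ℝ) + (dF:ℝ)/2) * rj ^ ((dF:ℝ)/2 + 1)
      ≤ ra ^ (dR:ℝ) * (rj ^ ((dF:ℝ)/2) * rj ^ ((dF:ℝ)/2 + 1)) := by
    rw [Real.rpow_add hm]
    have t1 : m ^ (dR:ℝ) ≤ ra ^ (dR:ℝ) := Real.rpow_le_rpow hm.le hma (by positivity)
    have t2 : m ^ ((dF:ℝ)/2) ≤ rj ^ ((dF:ℝ)/2) := Real.rpow_le_rpow hm.le hmj (by positivity)
    calc m ^ (dR:ℝ) * m ^ ((dF:ℝ)/2) * rj ^ ((dF:ℝ)/2 + 1)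
        ≤ ra ^ (dR:ℝ) * rj ^ ((dF:ℝ)/2) * rj ^ ((dF:ℝ)/2 + 1) := by
          have : (0:ℝ) ≤ rj ^ ((dF:ℝ)/2 + 1) := by positivity
          have h1 : m ^ (dR:ℝ) * m ^ ((dF:ℝ)/2) ≤ ra ^ (dR:ℝ) * rj ^ ((dF:ℝ)/2) := by
            apply mul_le_mul t1 t2 (by positivity) (by positivity)
          exact mul_le_mul_of_nonneg_right h1 this
      _ = ra ^ (dR:ℝ) * (rj ^ ((dF:ℝ)/2) * rj ^ ((dF:ℝ)/2 + 1)) := by ring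
  calc m ^ ((dR:ℝ) + (dF:ℝ)/2) * rj ^ ((dF:ℝ)/2 + 1)
      ≤ ra ^ (dR:ℝ) * (rj ^ ((dF:ℝ)/2) * rj ^ ((dF:ℝ)/2 + 1)) := key
    _ = ra ^ dR * rj ^ (dF+1) := by
        rw [← Real.rpow_add hrj]
        rw [Real.rpow_natCast]
        congr 1
        rw [show ((dF:ℝ)/2 + ((dF:ℝ)/2 + 1)) = ((dF:ℝ) + 1) by ring,
          show ((dF:ℝ) + 1) = ((dF+1 : ℕ) : ℝ) by push_cast; ring, Real.rpow_natCast]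

lemma core2 {m rj rb : ℝ} (dR dF : ℕ) (hdR : 1 ≤ dR) (hm : 0 < m) (hmj : m ≤ rj)
    (hmb : m ≤ rb) :
    1/(rj^dR * rb ^ ((dF:ℝ)/2 + 1)) ≤ m ^ (-(dR:ℝ) - (dF:ℝ)/2) / rj := by
  have hrj : 0 < rj := lt_of_lt_of_le hm hmj
  have hrb : 0 < rb := lt_of_lt_of_le hm hmb
  have e1 : m ^ (-(dR:ℝ) - (dF:ℝ)/2) = 1 / m ^ ((dR:ℝ) + (dF:ℝ)/2) := by
    rw [show (-(dR:ℝ) - (dF:ℝ)/2) = -((dR:ℝ)+(dF:ℝ)/2) by ring, Real.rpow_neg hm.le, one_div]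
  rw [e1, div_div]
  apply one_div_le_one_div_of_le (by positivity)
  have hd1 : (0:ℝ) ≤ (dR:ℝ) - 1 := by
    have : (1:ℝ) ≤ (dR:ℝ) := by exact_mod_cast hdR
    linarith
  have t1 : m ^ ((dR:ℝ) - 1) ≤ rj ^ ((dR:ℝ) - 1) := Real.rpow_le_rpow hm.le hmj hd1
  have t2 : m ^ ((dF:ℝ)/2 + 1) ≤ rb ^ ((dF:ℝ)/2 + 1) := Real.rpow_le_rpow hm.le hmb (by positivity)
  calc m ^ ((dR:ℝ) + (dF:ℝ)/2) * rj
      = m ^ ((dR:ℝ) - 1) * m ^ ((dF:ℝ)/2 + 1) * rj := by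
        rw [← Real.rpow_add hm]; ring_nf
    _ ≤ rj ^ ((dR:ℝ) - 1) * rb ^ ((dF:ℝ)/2 + 1) * rj := by
        have h1 : m ^ ((dR:ℝ) - 1) * m ^ ((dF:ℝ)/2 + 1) ≤ rj ^ ((dR:ℝ) - 1) * rb ^ ((dF:ℝ)/2 + 1) :=
          mul_le_mul t1 t2 (by positivity) (by positivity)
        exact mul_le_mul_of_nonneg_right h1 hrj.le
    _ = rj ^ dR * rb ^ ((dF:ℝ)/2 + 1) := by
        rw [show rj ^ ((dR:ℝ) - 1) * rb ^ ((dF:ℝ)/2 + 1) * rj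
            = rj ^ ((dR:ℝ) - 1) * rj ^ (1:ℝ) * rb ^ ((dF:ℝ)/2 + 1) by rw [Real.rpow_one]; ring,
          ← Real.rpow_add hrj]
        norm_num

lemma hpow_eq {c hh : ℝ} (hc : 0 < c) (hh0 : 0 < hh) (dF : ℕ) :
    hh ^ dF = (c * hh^2) ^ ((dF:ℝ)/2) / c ^ ((dF:ℝ)/2) := by
  rw [Real.mul_rpow hc.le (by positivity)]
  rw [show (hh^2 : ℝ) = hh ^ (2:ℝ) by rw [← Real.rpow_natCast hh 2]; norm_num]
  rw [← Real.rpow_mul hh0.le]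
  rw [show (2 * ((dF:ℝ)/2)) = (dF:ℝ) by ring, Real.rpow_natCast]
  rw [mul_comm, mul_div_assoc, div_self (by positivity), mul_one]

lemma sum_shift (f : ℕ → ℝ) (a b : ℕ) :
    ∑ k ∈ Finset.Ico (a+1) (b+1), f (k-1) = ∑ k ∈ Finset.Ico a b, f k := by
  rw [Finset.sum_Ico_eq_sum_range, Finset.sum_Ico_eq_sum_range]
  rw [show b + 1 - (a + 1) = b - a by omega]
  apply Finset.sum_congr rfl
  intro i _
  congr 1
  omega

lemma sum_decomp (f g : ℕ → ℝ) (n i0 : ℕ) (hi0 : i0 < n)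
    (h1 : ∀ k < i0, g k = f k) (h2 : ∀ k, i0+3 ≤ k → k ≤ n → g k = f (k-1)) :
    ∑ k ∈ Finset.range (n+1), g k - ∑ k ∈ Finset.range n, f k
      = (g i0 - f i0) + g (i0+1) + (if i0+1 < n then g (i0+2) - f (i0+1) else 0) := by
  have hbase : ∑ k ∈ Finset.range i0, g k = ∑ k ∈ Finset.range i0, f k :=
    Finset.sum_congr rfl (fun k hk => h1 k (Finset.mem_range.mp hk))
  rcases lt_or_ge (i0+1) n with hcase | hcase
  · -- i0 + 2 ≤ n
    have e1 : ∑ k ∈ Finset.range (n+1), g k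
        = ∑ k ∈ Finset.range (i0+3), g k + ∑ k ∈ Finset.Ico (i0+3) (n+1), g k := by
      rw [Finset.sum_range_add_sum_Ico _ (by omega)]
    have e2 : ∑ k ∈ Finset.Ico (i0+3) (n+1), g k = ∑ k ∈ Finset.Ico (i0+2) n, f k := by
      rw [← sum_shift f (i0+2) n]
      apply Finset.sum_congr rfl
      intro k hk
      rw [Finset.mem_Ico] at hk
      exact h2 k hk.1 (by omega)
    have e3 : ∑ k ∈ Finset.range n, f k
        = ∑ k ∈ Finset.range (i0+2), f k + ∑ k ∈ Finset.Ico (i0+2) n, f k := by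
      rw [Finset.sum_range_add_sum_Ico _ (by omega)]
    rw [e1, e2, e3, Finset.sum_range_succ, Finset.sum_range_succ, Finset.sum_range_succ,
      Finset.sum_range_succ, Finset.sum_range_succ, hbase, if_pos hcase]
    ring
  · -- n = i0 + 1
    have hn : n = i0 + 1 := by omega
    subst hn
    rw [Finset.sum_range_succ, Finset.sum_range_succ, Finset.sum_range_succ, hbase,
      if_neg (by omega)]
    ring

lemma dichotomy {ra rb : ℝ} (hb : 0 < rb) (ℓ : ℤ) (hl : ra / rb = (4:ℝ)^ℓ) :
    rb ≤ ra ∨ ra ≤ rb / 4 := by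
  have hra : ra = rb * (4:ℝ)^ℓ := by
    field_simp at hl; linarith [hl]
  rcases le_or_gt 0 ℓ with hℓ | hℓ
  · left
    have : (1:ℝ) ≤ (4:ℝ)^ℓ := one_le_zpow₀ (by norm_num) hℓ
    nlinarith
  · right
    have hℓ' : ℓ ≤ -1 := by omega
    have : (4:ℝ)^ℓ ≤ (4:ℝ)^(-1 : ℤ) := zpow_le_zpow_right₀ (by norm_num) hℓ'
    have h4 : (4:ℝ)^ℓ ≤ 1/4 := by
      calc (4:ℝ)^ℓ ≤ (4:ℝ)^(-1:ℤ) := this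
        _ = 1/4 := by norm_num
    nlinarith

lemma sigma_pos {L h ρ : ℝ} (hL : 0 ≤ L) (h0 : 0 ≤ h) (h1 : L * h < 1) (hρ : 0 < ρ) :
    0 < sigmaFun L h ρ := by
  have h2 : (0:ℝ) < 1 - L*h := by linarith
  have h3 : (0:ℝ) < 1 + L*h := by positivity
  unfold sigmaFun
  have : 0 < (1 + L*h)/(1 - L*h) + 6 := by positivity
  positivity

lemma num_mono {v V hh Tb σ S D : ℝ} (dF : ℕ) (hD : 0 < D) (hv0 : 0 ≤ v) (hvV : v ≤ V)
    (hh0 : 0 ≤ hh) (hhT : hh ≤ Tb) (hσ0 : 0 ≤ σ) (hσS : σ ≤ S) :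
    4 * v * hh^dF * σ / D ≤ 4 * V * Tb^dF * S / D := by
  have hV0 : 0 ≤ V := le_trans hv0 hvV
  have hT0 : 0 ≤ Tb := le_trans hh0 hhT
  have hp : hh^dF ≤ Tb^dF := pow_le_pow_left₀ hh0 hhT dF
  rw [div_le_div_iff_of_pos_right hD]
  have h1 : 4 * v * hh^dF ≤ 4 * V * Tb^dF :=
    mul_le_mul (by linarith) hp (pow_nonneg hh0 _)
      (mul_nonneg (by norm_num) hV0)
  exact mul_le_mul h1 hσS hσ0
    (mul_nonneg (mul_nonneg (by norm_num) hV0) (pow_nonneg hT0 _))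

lemma big1 {V S Tb m ra rj : ℝ} (dR dF : ℕ) (hV : 0 ≤ V) (hS : 0 ≤ S) (hTb : 0 ≤ Tb)
    (hm : 0 < m) (hma : m ≤ ra) (hmj : m ≤ rj) :
    4 * V * Tb^dF * S / (ra^dR * (rj/4)^(dF+1))
      ≤ m ^ (-(dR:ℝ) - (dF:ℝ)/2) * (4^(dF+2) * S * V * Tb^dF / rj ^ ((dF:ℝ)/2 + 1)) := by
  have hra : 0 < ra := lt_of_lt_of_le hm hma
  have hrj : 0 < rj := lt_of_lt_of_le hm hmj
  have hnn : (0:ℝ) ≤ 4^(dF+2) * S * V * Tb^dF :=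
    mul_nonneg (mul_nonneg (mul_nonneg (by positivity) hS) hV) (pow_nonneg hTb _)
  have e : 4 * V * Tb^dF * S / (ra^dR * (rj/4)^(dF+1))
      = (4:ℝ)^(dF+2) * S * V * Tb^dF * (1/(ra^dR * rj^(dF+1))) := by
    rw [div_pow]
    field_simp
    ring
  rw [e]
  calc (4:ℝ)^(dF+2) * S * V * Tb^dF * (1/(ra^dR * rj^(dF+1)))
      ≤ (4:ℝ)^(dF+2) * S * V * Tb^dF * (m ^ (-(dR:ℝ) - (dF:ℝ)/2) / rj ^ ((dF:ℝ)/2 + 1)) :=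
        mul_le_mul_of_nonneg_left (core1 dR dF hm hma hmj) hnn
    _ = m ^ (-(dR:ℝ) - (dF:ℝ)/2) * (4^(dF+2) * S * V * Tb^dF / rj ^ ((dF:ℝ)/2 + 1)) := by
        ring

lemma big2 {V S Tb m rj : ℝ} (dR dF : ℕ) (hV : 0 ≤ V) (hS : 0 ≤ S) (hTb : 0 ≤ Tb)
    (hm : 0 < m) (hmj : m ≤ rj) :
    4 * V * Tb^dF * S / ((rj/4)^dR * (rj/4)^(dF+1))
      ≤ m ^ (-(dR:ℝ) - (dF:ℝ)/2) * (4^(dR+dF+2) * S * V * Tb^dF / rj ^ ((dF:ℝ)/2 + 1)) := by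
  have hrj : 0 < rj := lt_of_lt_of_le hm hmj
  have hnn : (0:ℝ) ≤ 4^(dR+dF+2) * S * V * Tb^dF :=
    mul_nonneg (mul_nonneg (mul_nonneg (by positivity) hS) hV) (pow_nonneg hTb _)
  have e : 4 * V * Tb^dF * S / ((rj/4)^dR * (rj/4)^(dF+1))
      = (4:ℝ)^(dR+dF+2) * S * V * Tb^dF * (1/(rj^dR * rj^(dF+1))) := by
    rw [div_pow, div_pow]
    field_simp
    ring
  rw [e]
  calc (4:ℝ)^(dR+dF+2) * S * V * Tb^dF * (1/(rj^dR * rj^(dF+1)))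
      ≤ (4:ℝ)^(dR+dF+2) * S * V * Tb^dF * (m ^ (-(dR:ℝ) - (dF:ℝ)/2) / rj ^ ((dF:ℝ)/2 + 1)) :=
        mul_le_mul_of_nonneg_left (core1 dR dF hm hmj hmj) hnn
    _ = m ^ (-(dR:ℝ) - (dF:ℝ)/2) * (4^(dR+dF+2) * S * V * Tb^dF / rj ^ ((dF:ℝ)/2 + 1)) := by
        ring

lemma small_case {V S c hh rj rb m : ℝ} (dR dF : ℕ) (hdR : 1 ≤ dR) (hV : 0 ≤ V) (hS : 0 ≤ S)
    (hc : 0 < c) (hh0 : 0 < hh) (hm : 0 < m) (hmj : m ≤ rj) (hmb : m ≤ rb)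
    (hcoup : rb = c * hh^2) :
    4 * V * hh^dF * S / ((rj/4)^dR * rb^(dF+1))
      ≤ m ^ (-(dR:ℝ) - (dF:ℝ)/2) * (4^(dR+1) * S * V / (c ^ ((dF:ℝ)/2) * rj)) := by
  have hrj : 0 < rj := lt_of_lt_of_le hm hmj
  have hrb : 0 < rb := lt_of_lt_of_le hm hmb
  have hC2 : (0:ℝ) < c ^ ((dF:ℝ)/2) := Real.rpow_pos_of_pos hc _
  have hX : (0:ℝ) < rb ^ ((dF:ℝ)/2) := Real.rpow_pos_of_pos hrb _
  have hY : (0:ℝ) < rb ^ ((dF:ℝ)/2 + 1) := Real.rpow_pos_of_pos hrb _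
  have hhp : hh ^ dF = rb ^ ((dF:ℝ)/2) / c ^ ((dF:ℝ)/2) := by
    rw [hpow_eq hc hh0 dF, hcoup]
  have hXY : rb ^ (dF+1) = rb ^ ((dF:ℝ)/2) * rb ^ ((dF:ℝ)/2 + 1) := by
    rw [← Real.rpow_add hrb]
    rw [show ((dF:ℝ)/2 + ((dF:ℝ)/2 + 1)) = (((dF:ℕ)+1 : ℕ) : ℝ) by push_cast; ring,
      Real.rpow_natCast]
  have hnn : (0:ℝ) ≤ 4^(dR+1) * V * S / c ^ ((dF:ℝ)/2) :=
    div_nonneg (mul_nonneg (mul_nonneg (by positivity) hV) hS) hC2.le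
  have e : 4 * V * hh^dF * S / ((rj/4)^dR * rb^(dF+1))
      = (4:ℝ)^(dR+1) * V * S / c ^ ((dF:ℝ)/2) * (1/(rj^dR * rb ^ ((dF:ℝ)/2 + 1))) := by
    rw [hhp, hXY, div_pow]
    field_simp
    ring
  rw [e]
  calc (4:ℝ)^(dR+1) * V * S / c ^ ((dF:ℝ)/2) * (1/(rj^dR * rb ^ ((dF:ℝ)/2 + 1)))
      ≤ (4:ℝ)^(dR+1) * V * S / c ^ ((dF:ℝ)/2) * (m ^ (-(dR:ℝ) - (dF:ℝ)/2) / rj) :=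
        mul_le_mul_of_nonneg_left (core2 dR dF hdR hm hmj hmb) hnn
    _ = m ^ (-(dR:ℝ) - (dF:ℝ)/2) * (4^(dR+1) * S * V / (c ^ ((dF:ℝ)/2) * rj)) := by
        ring

set_option maxHeartbeats 1000000 in
theorem cost_increase_upper_bound (L P T : ℝ) (hL : 0 < L) (hP : 0 < P) (hT : 0 < T)
    (dR dF : ℕ) (hdR : 1 ≤ dR) (v : ℝ → ℝ) (V_U : ℝ)
    (hv : ∀ t ∈ Set.Icc (0:ℝ) T, 0 < v t)
    (hvU : ∀ t ∈ Set.Icc (0:ℝ) T, v t ≤ V_U)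
    (n : ℕ) (h ρ : ℕ → ℝ) (hn : 1 ≤ n)
    (hpos : ∀ j < n, 0 < h j) (hsum : ∑ j ∈ Finset.range n, h j = T)
    (hbd : ∀ j < n, h j ≤ 1/(4*L))
    (ρpos : ∀ k ≤ n, 0 < ρ k) (ρbd : ∀ k ≤ n, ρ k ≤ P/(8*L))
    (ratios : ∀ j ≤ n, ∀ k ≤ n, ∃ ℓ : ℤ, ρ j / ρ k = (4:ℝ)^ℓ)
    (coupling : ∀ j < n, ρ (j+1) = 2*L*P*(h j)^2)
    (j : ℕ) (hj : j ≤ n) :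
    costCsub L dR dF v n h ρ j - costC L dR dF v n h ρ ≤
      ((Finset.range (n+1)).inf' ⟨0, by simp⟩ ρ) ^ (-(dR:ℝ) - (dF:ℝ)/2) *
        (2 * 4^(dR+dF+2) * sigmaFun L (1/(4*L)) (P/(8*L)) * V_U * T^dF / (ρ j ^ ((dF:ℝ)/2 + 1))
          + 4^(dR+1) * sigmaFun L (1/(4*L)) (P/(8*L)) * V_U / ((2*L*P)^((dF:ℝ)/2) * ρ j)
          + 4^(dF+2) * sigmaFun L (1/(4*L)) (P/(8*L)) * V_U * T^dF / (ρ j ^ ((dF:ℝ)/2 + 1))) := by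
  have hL4 : L * (1/(4*L)) < 1 := by
    rw [show L * (1/(4*L)) = 1/4 by field_simp]; norm_num
  have hVpos : 0 < V_U :=
    lt_of_lt_of_le (hv 0 ⟨le_refl 0, hT.le⟩) (hvU 0 ⟨le_refl 0, hT.le⟩)
  set S := sigmaFun L (1/(4*L)) (P/(8*L)) with hS_def
  have hSpos : 0 < S := sigma_pos hL.le (by positivity) hL4 (by positivity)
  set m := ((Finset.range (n+1)).inf' ⟨0, by simp⟩ ρ) with hm_def
  have hmle : ∀ k, k ≤ n → m ≤ ρ k := by
    intro k hk
    exact Finset.inf'_le ρ (Finset.mem_range.mpr (by omega))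
  have hmpos : 0 < m := by
    obtain ⟨k, hk, hke⟩ :=
      Finset.exists_mem_eq_inf' (⟨0, by simp⟩ : (Finset.range (n+1)).Nonempty) ρ
    rw [hm_def, hke]
    exact ρpos k (Nat.lt_succ_iff.mp (Finset.mem_range.mp hk))
  have hρj : 0 < ρ j := ρpos j hj
  set B1 := m ^ (-(dR:ℝ) - (dF:ℝ)/2) * (4^(dR+dF+2) * S * V_U * T^dF / ρ j ^ ((dF:ℝ)/2 + 1))
    with hB1_def
  set B2 := m ^ (-(dR:ℝ) - (dF:ℝ)/2) * (4^(dR+1) * S * V_U / ((2*L*P)^((dF:ℝ)/2) * ρ j))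
    with hB2_def
  set B3 := m ^ (-(dR:ℝ) - (dF:ℝ)/2) * (4^(dF+2) * S * V_U * T^dF / ρ j ^ ((dF:ℝ)/2 + 1))
    with hB3_def
  have hme : 0 < m ^ (-(dR:ℝ) - (dF:ℝ)/2) := Real.rpow_pos_of_pos hmpos _
  have hrpj : 0 < ρ j ^ ((dF:ℝ)/2 + 1) := Real.rpow_pos_of_pos hρj _
  have hcLP : 0 < (2*L*P) ^ ((dF:ℝ)/2) := Real.rpow_pos_of_pos (by positivity) _
  have hB1p : 0 ≤ B1 := le_of_lt (mul_pos hme (div_pos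
    (mul_pos (mul_pos (mul_pos (by positivity) hSpos) hVpos) (pow_pos hT dF)) hrpj))
  have hB2p : 0 ≤ B2 := le_of_lt (mul_pos hme (div_pos
    (mul_pos (mul_pos (by positivity) hSpos) hVpos) (mul_pos hcLP hρj)))
  have hB3p : 0 ≤ B3 := le_of_lt (mul_pos hme (div_pos
    (mul_pos (mul_pos (mul_pos (by positivity) hSpos) hVpos) (pow_pos hT dF)) hrpj))
  have hgoal : ∀ X : ℝ, X ≤ B1 + B1 + B2 + B3 →
      X ≤ m ^ (-(dR:ℝ) - (dF:ℝ)/2) *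
        (2 * 4^(dR+dF+2) * S * V_U * T^dF / (ρ j ^ ((dF:ℝ)/2 + 1))
          + 4^(dR+1) * S * V_U / ((2*L*P)^((dF:ℝ)/2) * ρ j)
          + 4^(dF+2) * S * V_U * T^dF / (ρ j ^ ((dF:ℝ)/2 + 1))) := by
    intro X hX
    calc X ≤ B1 + B1 + B2 + B3 := hX
      _ = _ := by rw [hB1_def, hB2_def, hB3_def]; ring
  apply hgoal
  -- basic facts
  have hσS : ∀ x r : ℝ, 0 ≤ x → x ≤ 1/(4*L) → 0 ≤ r → r ≤ P/(8*L) → sigmaFun L x r ≤ S :=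
    fun x r h1 h2 h3 h4 => sigma_mono hL.le h1 h2 hL4 h3 h4
  have hσ0 : ∀ x r : ℝ, 0 ≤ x → x ≤ 1/(4*L) → 0 ≤ r → 0 ≤ sigmaFun L x r := by
    intro x r h1 h2 h3
    refine sigma_nonneg hL.le h1 ?_ h3
    calc L * x ≤ L * (1/(4*L)) := by nlinarith
      _ < 1 := hL4
  have htn0 : ∀ k, k ≤ n → 0 ≤ tnode h k := by
    intro k hk
    apply Finset.sum_nonneg
    intro i hi
    exact (hpos i (by have := Finset.mem_range.mp hi; omega)).le
  have htnT : ∀ k, k ≤ n → tnode h k ≤ T := by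
    intro k hk
    rw [← hsum]
    apply Finset.sum_le_sum_of_subset_of_nonneg
      (Finset.range_subset_range.mpr hk)
    intro i hi _
    exact (hpos i (Finset.mem_range.mp hi)).le
  have hhleT : ∀ k, k < n → h k ≤ T := by
    intro k hk
    rw [← hsum]
    exact Finset.single_le_sum (f := h)
      (fun i hi => (hpos i (Finset.mem_range.mp hi)).le) (Finset.mem_range.mpr hk)
  set F : ℕ → ℝ := fun k => 4 * v (tnode h k) * h k ^ dF * sigmaFun L (h k) (ρ k) /
      (ρ k ^ dR * min (ρ k) (ρ (k+1)) ^ (dF+1)) with hF_def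
  have hcostC : costC L dR dF v n h ρ = ∑ k ∈ Finset.range n, F k := rfl
  have hF0 : ∀ k, k < n → 0 ≤ F k := by
    intro k hk
    have hhk := hpos k hk
    have hbk := hbd k hk
    apply div_nonneg
    · exact mul_nonneg (mul_nonneg (mul_nonneg (by norm_num)
        (hv _ ⟨htn0 k hk.le, htnT k hk.le⟩).le) (pow_nonneg hhk.le _))
        (hσ0 _ _ hhk.le hbk (ρpos k hk.le).le)
    · exact mul_nonneg (pow_nonneg (ρpos k hk.le).le _)
        (pow_nonneg (le_min (ρpos k hk.le).le (ρpos (k+1) (by omega)).le) _)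
  rcases Nat.eq_zero_or_pos j with hj0 | hjpos
  · -- case j = 0
    subst hj0
    set G : ℕ → ℝ := fun k => 4 * v (tnode h k) * h k ^ dF * sigmaFun L (h k) (subρ0 ρ k) /
        (subρ0 ρ k ^ dR * min (subρ0 ρ k) (subρ0 ρ (k+1)) ^ (dF+1)) with hG_def
    have hsubeq : costCsub L dR dF v n h ρ 0 = ∑ k ∈ Finset.range n, G k := by
      simp only [costCsub, if_pos rfl]
      rfl
    have hdiff : costCsub L dR dF v n h ρ 0 - costC L dR dF v n h ρ = G 0 - F 0 := by
      rw [hsubeq, hcostC, ← Finset.sum_sub_distrib]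
      apply Finset.sum_eq_single_of_mem 0 (Finset.mem_range.mpr (by omega))
      intro k hk hk0
      have e1 : subρ0 ρ k = ρ k := by simp [subρ0, hk0]
      have e2 : subρ0 ρ (k+1) = ρ (k+1) := by simp [subρ0]
      simp only [hG_def, hF_def, e1, e2, sub_self]
    rw [hdiff]
    have hρ0 : 0 < ρ 0 := ρpos 0 (by omega)
    have hρ1 : 0 < ρ 1 := ρpos 1 (by omega)
    have hh0 : 0 < h 0 := hpos 0 (by omega)
    have hb0 := hbd 0 (by omega)
    have hsub0 : subρ0 ρ 0 = ρ 0 / 4 := by simp [subρ0]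
    have hsub1 : subρ0 ρ (0+1) = ρ 1 := by simp [subρ0]
    have hG0 : G 0 = 4 * v (tnode h 0) * h 0 ^ dF * sigmaFun L (h 0) (ρ 0/4) /
        ((ρ 0/4) ^ dR * min (ρ 0/4) (ρ 1) ^ (dF+1)) := by
      simp only [hG_def, hsub0, hsub1]
    have hv0 := hv _ ⟨htn0 0 (by omega), htnT 0 (by omega)⟩
    have hvU0 := hvU _ ⟨htn0 0 (by omega), htnT 0 (by omega)⟩
    have hσS0 : sigmaFun L (h 0) (ρ 0/4) ≤ S :=
      hσS _ _ hh0.le hb0 (by linarith) (by linarith [ρbd 0 (by omega)])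
    have hσ00 : 0 ≤ sigmaFun L (h 0) (ρ 0/4) := hσ0 _ _ hh0.le hb0 (by linarith)
    obtain ⟨ℓ, hℓ⟩ := ratios 1 (by omega) 0 (by omega)
    have hF00 := hF0 0 (by omega)
    rcases dichotomy hρ0 ℓ hℓ with hcase | hcase
    · -- ρ 0 ≤ ρ 1 : big case
      have hmin : min (ρ 0/4) (ρ 1) = ρ 0/4 := min_eq_left (by linarith)
      have hD : 0 < (ρ 0/4)^dR * (ρ 0/4)^(dF+1) :=
        mul_pos (pow_pos (by linarith) _) (pow_pos (by linarith) _)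
      have step1 : G 0 ≤ 4 * V_U * T^dF * S / ((ρ 0/4)^dR * (ρ 0/4)^(dF+1)) := by
        rw [hG0, hmin]
        exact num_mono dF hD hv0.le hvU0 hh0.le (hhleT 0 (by omega)) hσ00 hσS0
      have step2 := big2 (V := V_U) (S := S) (Tb := T) (m := m) (rj := ρ 0) dR dF
        hVpos.le hSpos.le hT.le hmpos (hmle 0 (by omega))
      linarith
    · -- ρ 1 ≤ ρ 0 / 4 : small case
      have hmin : min (ρ 0/4) (ρ 1) = ρ 1 := min_eq_right (by linarith)
      have hD : 0 < (ρ 0/4)^dR * (ρ 1)^(dF+1) :=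
        mul_pos (pow_pos (by linarith) _) (pow_pos hρ1 _)
      have step1 : G 0 ≤ 4 * V_U * h 0 ^ dF * S / ((ρ 0/4)^dR * (ρ 1)^(dF+1)) := by
        rw [hG0, hmin]
        exact num_mono dF hD hv0.le hvU0 hh0.le le_rfl hσ00 hσS0
      have step2 := small_case (V := V_U) (S := S) (c := 2*L*P) (hh := h 0)
        (rj := ρ 0) (rb := ρ 1) (m := m) dR dF hdR hVpos.le hSpos.le (by positivity)
        hh0 hmpos (hmle 0 (by omega)) (hmle 1 (by omega)) (coupling 0 (by omega))
      linarith
  · -- case j ≥ 1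
    obtain ⟨i0, rfl⟩ : ∃ i0, j = i0 + 1 := ⟨j-1, by omega⟩
    have hi0n : i0 < n := by omega
    set h' := subh h i0 with hh'_def
    set ρ' := subρ ρ (i0+1) with hρ'_def
    -- pointwise evaluations
    have hh'_lt : ∀ i, i < i0 → h' i = h i := by
      intro i hi; simp only [hh'_def, subh]; rw [if_pos hi]
    have hh'_i0 : h' i0 = h i0 / 2 := by
      simp only [hh'_def, subh]; rw [if_neg (by omega), if_pos (by omega)]
    have hh'_i01 : h' (i0+1) = h i0 / 2 := by
      simp only [hh'_def, subh]; rw [if_neg (by omega), if_pos (by omega)]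
    have hh'_gt : ∀ i, i0+2 ≤ i → h' i = h (i-1) := by
      intro i hi; simp only [hh'_def, subh]; rw [if_neg (by omega), if_neg (by omega)]
    have hρ'_lt : ∀ k, k < i0+1 → ρ' k = ρ k := by
      intro k hk; simp only [hρ'_def, subρ]; rw [if_pos hk]
    have hρ'_j : ρ' (i0+1) = ρ (i0+1)/4 := by
      simp only [hρ'_def, subρ]; rw [if_neg (by omega), if_pos (by omega)]
    have hρ'_j1 : ρ' (i0+2) = ρ (i0+1)/4 := by
      simp only [hρ'_def, subρ]; rw [if_neg (by omega), if_pos (by omega)]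
    have hρ'_gt : ∀ k, i0+3 ≤ k → ρ' k = ρ (k-1) := by
      intro k hk; simp only [hρ'_def, subρ]; rw [if_neg (by omega), if_neg (by omega)]
    -- tnode evaluations
    have htn_lt : ∀ k, k ≤ i0 → tnode h' k = tnode h k := by
      intro k hk
      apply Finset.sum_congr rfl
      intro i hi
      exact hh'_lt i (by have := Finset.mem_range.mp hi; omega)
    have htn_j : tnode h' (i0+1) = tnode h i0 + h i0/2 := by
      show (∑ i ∈ Finset.range (i0+1), h' i) = _
      rw [Finset.sum_range_succ, hh'_i0]
      congr 1
      exact htn_lt i0 le_rfl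
    have htn_shift0 : ∀ d, tnode h' (i0+2+d) = tnode h (i0+1+d) := by
      intro d
      induction d with
      | zero =>
        show (∑ i ∈ Finset.range (i0+2), h' i) = ∑ i ∈ Finset.range (i0+1), h i
        rw [Finset.sum_range_succ, Finset.sum_range_succ, Finset.sum_range_succ, hh'_i0,
          hh'_i01]
        have e0 : (∑ i ∈ Finset.range i0, h' i) = ∑ i ∈ Finset.range i0, h i :=
          htn_lt i0 le_rfl
        rw [e0]
        ring
      | succ d ih =>
        show (∑ i ∈ Finset.range (i0+2+d+1), h' i) = ∑ i ∈ Finset.range (i0+1+d+1), h i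
        rw [Finset.sum_range_succ, Finset.sum_range_succ]
        rw [show (∑ i ∈ Finset.range (i0+2+d), h' i) = tnode h (i0+1+d) from ih]
        rw [hh'_gt (i0+2+d) (by omega), show i0+2+d-1 = i0+1+d by omega]
        rfl
    have htn_shift : ∀ k, i0+2 ≤ k → tnode h' k = tnode h (k-1) := by
      intro k hk
      obtain ⟨d, rfl⟩ : ∃ d, k = i0+2+d := ⟨k-(i0+2), by omega⟩
      rw [htn_shift0 d, show i0+2+d-1 = i0+1+d by omega]
    -- the subdivided cost as a sum
    set G : ℕ → ℝ := fun k => 4 * v (tnode h' k) * h' k ^ dF * sigmaFun L (h' k) (ρ' k) /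
        (ρ' k ^ dR * min (ρ' k) (ρ' (k+1)) ^ (dF+1)) with hG_def
    have hsubeq : costCsub L dR dF v n h ρ (i0+1) = ∑ k ∈ Finset.range (n+1), G k := by
      simp only [costCsub, if_neg (by omega : ¬ i0+1 = 0), Nat.add_sub_cancel]
      rfl
    have hdec := sum_decomp F G n i0 hi0n
      (by
        intro k hk
        simp only [hG_def, hF_def]
        rw [hh'_lt k hk, hρ'_lt k (by omega), hρ'_lt (k+1) (by omega), htn_lt k (by omega)])
      (by
        intro k hk1 hk2
        simp only [hG_def, hF_def]
        rw [hh'_gt k (by omega), hρ'_gt k (by omega), hρ'_gt (k+1) (by omega),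
          htn_shift k (by omega), show k+1-1 = k by omega, show k-1+1 = k by omega])
    rw [hsubeq, hcostC, hdec]
    -- common positivity facts
    have hρi0 : 0 < ρ i0 := ρpos i0 (by omega)
    have hρj1 : 0 < ρ (i0+1) := hρj
    have hhi0 : 0 < h i0 := hpos i0 (by omega)
    have hbi0 := hbd i0 (by omega)
    have hLhi0 : L * h i0 < 1 := by
      calc L * h i0 ≤ L * (1/(4*L)) := by nlinarith
        _ < 1 := hL4
    have hvti0 := hv _ ⟨htn0 i0 (by omega), htnT i0 (by omega)⟩
    have hvUi0 := hvU _ ⟨htn0 i0 (by omega), htnT i0 (by omega)⟩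
    -- D1 : G i0 - F i0 ≤ B3
    have hD1 : G i0 - F i0 ≤ B3 := by
      have hGi0 : G i0 = 4 * v (tnode h i0) * (h i0/2) ^ dF *
          sigmaFun L (h i0/2) (ρ i0) /
          (ρ i0 ^ dR * min (ρ i0) (ρ (i0+1)/4) ^ (dF+1)) := by
        simp only [hG_def]
        rw [hh'_i0, hρ'_lt i0 (by omega), hρ'_j, htn_lt i0 le_rfl]
      obtain ⟨ℓ, hℓ⟩ := ratios i0 (by omega) (i0+1) hj
      rcases dichotomy hρj1 ℓ hℓ with hcase | hcase
      · -- ρ (i0+1) ≤ ρ i0 : big case, bound by B3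
        have hmin : min (ρ i0) (ρ (i0+1)/4) = ρ (i0+1)/4 := min_eq_right (by linarith)
        have hD : 0 < ρ i0 ^ dR * (ρ (i0+1)/4)^(dF+1) :=
          mul_pos (pow_pos hρi0 _) (pow_pos (by linarith) _)
        have step1 : G i0 ≤ 4 * V_U * T^dF * S / (ρ i0 ^ dR * (ρ (i0+1)/4)^(dF+1)) := by
          rw [hGi0, hmin]
          exact num_mono dF hD hvti0.le hvUi0 (by linarith)
            (by linarith [hhleT i0 (by omega)])
            (hσ0 _ _ (by linarith) (by linarith) hρi0.le)
            (hσS _ _ (by linarith) (by linarith) hρi0.le (ρbd i0 (by omega)))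
        have step2 := big1 (V := V_U) (S := S) (Tb := T) (m := m) (ra := ρ i0)
          (rj := ρ (i0+1)) dR dF hVpos.le hSpos.le hT.le hmpos (hmle i0 (by omega))
          (hmle (i0+1) (by omega))
        have hFnn := hF0 i0 (by omega)
        linarith
      · -- ρ i0 ≤ ρ (i0+1)/4 : G i0 ≤ F i0
        have hmin1 : min (ρ i0) (ρ (i0+1)/4) = ρ i0 := min_eq_left hcase
        have hmin2 : min (ρ i0) (ρ (i0+1)) = ρ i0 := min_eq_left (by linarith)
        have hFi0 : F i0 = 4 * v (tnode h i0) * h i0 ^ dF * sigmaFun L (h i0) (ρ i0) /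
            (ρ i0 ^ dR * ρ i0 ^ (dF+1)) := by
          simp only [hF_def]
          rw [hmin2]
        have hD : 0 < ρ i0 ^ dR * ρ i0 ^(dF+1) :=
          mul_pos (pow_pos hρi0 _) (pow_pos hρi0 _)
        have step1 : G i0 ≤ F i0 := by
          rw [hGi0, hmin1, hFi0]
          exact num_mono dF hD hvti0.le le_rfl (by linarith) (by linarith)
            (hσ0 _ _ (by linarith) (by linarith) hρi0.le)
            (sigma_mono hL.le (by linarith) (by linarith) hLhi0 hρi0.le le_rfl)
        linarith
    -- D2 : G (i0+1) ≤ B1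
    have hD2 : G (i0+1) ≤ B1 := by
      have htj01 : 0 ≤ tnode h i0 + h i0/2 := by
        have := htn0 i0 (by omega); linarith
      have htj0T : tnode h i0 + h i0/2 ≤ T := by
        have e1 : tnode h (i0+1) = tnode h i0 + h i0 := Finset.sum_range_succ h i0
        have := htnT (i0+1) hj
        rw [e1] at this
        linarith
      have hGj : G (i0+1) = 4 * v (tnode h i0 + h i0/2) * (h i0/2) ^ dF *
          sigmaFun L (h i0/2) (ρ (i0+1)/4) /
          ((ρ (i0+1)/4) ^ dR * (ρ (i0+1)/4) ^ (dF+1)) := by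
        simp only [hG_def]
        rw [hh'_i01, hρ'_j, hρ'_j1, htn_j, min_self]
      have hD : 0 < (ρ (i0+1)/4) ^ dR * (ρ (i0+1)/4)^(dF+1) :=
        mul_pos (pow_pos (by linarith) _) (pow_pos (by linarith) _)
      have step1 : G (i0+1) ≤ 4 * V_U * T^dF * S /
          ((ρ (i0+1)/4) ^ dR * (ρ (i0+1)/4)^(dF+1)) := by
        rw [hGj]
        exact num_mono dF hD (hv _ ⟨htj01, htj0T⟩).le (hvU _ ⟨htj01, htj0T⟩)
          (by linarith) (by linarith [hhleT i0 (by omega)])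
          (hσ0 _ _ (by linarith) (by linarith) (by linarith))
          (hσS _ _ (by linarith) (by linarith) (by linarith)
            (by linarith [ρbd (i0+1) hj]))
      have step2 := big2 (V := V_U) (S := S) (Tb := T) (m := m) (rj := ρ (i0+1)) dR dF
        hVpos.le hSpos.le hT.le hmpos (hmle (i0+1) hj)
      linarith
    -- D3
    have hD3 : (if i0+1 < n then G (i0+2) - F (i0+1) else 0) ≤ B1 + B2 := by
      rcases lt_or_ge (i0+1) n with hcn | hcn
      · rw [if_pos hcn]
        have hρj2 : 0 < ρ (i0+2) := ρpos (i0+2) (by omega)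
        have hhj1 : 0 < h (i0+1) := hpos (i0+1) hcn
        have hbj1 := hbd (i0+1) hcn
        have hvt1 := hv _ ⟨htn0 (i0+1) (by omega), htnT (i0+1) (by omega)⟩
        have hvU1 := hvU _ ⟨htn0 (i0+1) (by omega), htnT (i0+1) (by omega)⟩
        have hGj1 : G (i0+2) = 4 * v (tnode h (i0+1)) * h (i0+1) ^ dF *
            sigmaFun L (h (i0+1)) (ρ (i0+1)/4) /
            ((ρ (i0+1)/4) ^ dR * min (ρ (i0+1)/4) (ρ (i0+2)) ^ (dF+1)) := by
          simp only [hG_def]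
          rw [hh'_gt (i0+2) (by omega), show i0+2-1 = i0+1 by omega, hρ'_j1,
            hρ'_gt (i0+3) (by omega), show i0+3-1 = i0+2 by omega,
            htn_shift (i0+2) (by omega), show i0+2-1 = i0+1 by omega]
        have hσS1 : sigmaFun L (h (i0+1)) (ρ (i0+1)/4) ≤ S :=
          hσS _ _ hhj1.le hbj1 (by linarith) (by linarith [ρbd (i0+1) hj])
        have hσ01 : 0 ≤ sigmaFun L (h (i0+1)) (ρ (i0+1)/4) :=
          hσ0 _ _ hhj1.le hbj1 (by linarith)
        have hFnn := hF0 (i0+1) hcn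
        obtain ⟨ℓ, hℓ⟩ := ratios (i0+2) (by omega) (i0+1) hj
        rcases dichotomy hρj1 ℓ hℓ with hcase | hcase
        · -- ρ (i0+1) ≤ ρ (i0+2) : big case, bound by B1
          have hmin : min (ρ (i0+1)/4) (ρ (i0+2)) = ρ (i0+1)/4 :=
            min_eq_left (by linarith)
          have hD : 0 < (ρ (i0+1)/4) ^ dR * (ρ (i0+1)/4)^(dF+1) :=
            mul_pos (pow_pos (by linarith) _) (pow_pos (by linarith) _)
          have step1 : G (i0+2) ≤ 4 * V_U * T^dF * S /
              ((ρ (i0+1)/4) ^ dR * (ρ (i0+1)/4)^(dF+1)) := by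
            rw [hGj1, hmin]
            exact num_mono dF hD hvt1.le hvU1 hhj1.le (hhleT (i0+1) hcn) hσ01 hσS1
          have step2 := big2 (V := V_U) (S := S) (Tb := T) (m := m) (rj := ρ (i0+1)) dR dF
            hVpos.le hSpos.le hT.le hmpos (hmle (i0+1) hj)
          linarith
        · -- ρ (i0+2) ≤ ρ (i0+1)/4 : small case, bound by B2
          have hmin : min (ρ (i0+1)/4) (ρ (i0+2)) = ρ (i0+2) :=
            min_eq_right (by linarith)
          have hD : 0 < (ρ (i0+1)/4) ^ dR * (ρ (i0+2))^(dF+1) :=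
            mul_pos (pow_pos (by linarith) _) (pow_pos hρj2 _)
          have step1 : G (i0+2) ≤ 4 * V_U * h (i0+1) ^ dF * S /
              ((ρ (i0+1)/4) ^ dR * (ρ (i0+2))^(dF+1)) := by
            rw [hGj1, hmin]
            exact num_mono dF hD hvt1.le hvU1 hhj1.le le_rfl hσ01 hσS1
          have step2 := small_case (V := V_U) (S := S) (c := 2*L*P) (hh := h (i0+1))
            (rj := ρ (i0+1)) (rb := ρ (i0+2)) (m := m) dR dF hdR hVpos.le hSpos.le
            (by positivity) hhj1 hmpos (hmle (i0+1) hj) (hmle (i0+2) (by omega))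
            (coupling (i0+1) hcn)
          linarith
      · rw [if_neg (by omega)]
        linarith
    linarith
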